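/- Let P ⊆ ℝⁿ be a discrete point set and p ∈ P such that p ∈ interior(conv({p₁,...,p_k})) for finitely many points p₁,...,p_k ∈ P. Then, with m = max{½‖pᵢ − p‖² : i = 1,...,k}, the Voronoi cell V(p) is contained in the bounded set p + m·C, where C is the polar set {x : ⟨x, pᵢ − p⟩ ≤ 1 for i = 1,...,k}; in particular V(p) is bounded. -/

import Mathlib

open scoped RealInnerProductSpace
open Set

noncomputable section

abbrev E (n : ℕ) := EuclideanSpace ℝ (Fin n)

/-- `P` is discrete: every bounded set contains only finitely many points of `P`. -/
def IsDiscretePointSet {n : ℕ} (P : Set (E n)) : Prop :=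
  ∀ B : Set (E n), Bornology.IsBounded B → (P ∩ B).Finite

/-- The Voronoi cell of `p` relative to `P`. -/
def voronoiCell {n : ℕ} (P : Set (E n)) (p : E n) : Set (E n) :=
  {x | ∀ q ∈ P, dist x p ≤ dist x q}

/-- A polyhedron: a finite intersection of closed half-spaces. -/
def IsPolyhedron {n : ℕ} (S : Set (E n)) : Prop :=
  ∃ (k : ℕ) (y : Fin k → E n) (α : Fin k → ℝ),
    S = ⋂ i, {x : E n | (inner ℝ x (y i) : ℝ) ≤ α i}

/-- A polytope: a bounded polyhedron. -/
def IsPolytope {n : ℕ} (S : Set (E n)) : Prop :=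
  IsPolyhedron S ∧ Bornology.IsBounded S

/-- The half-space of points at least as close to `p` as to `q`. -/
def halfSpace {n : ℕ} (p q : E n) : Set (E n) :=
  {x : E n | (inner ℝ (x - p) (q - p) : ℝ) ≤ (1/2) * ‖q - p‖^2}

/-- The conic hull: all nonnegative combinations of finitely many elements of `M`. -/
def coneHull {n : ℕ} (M : Set (E n)) : Set (E n) :=
  {x | ∃ (k : ℕ) (v : Fin k → E n) (c : Fin k → ℝ),
    (∀ i, v i ∈ M) ∧ (∀ i, 0 ≤ c i) ∧ x = ∑ i, c i • v i}

/-- The direction cone of `p`: the conic hull of `P - p`. -/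
def dirCone {n : ℕ} (P : Set (E n)) (p : E n) : Set (E n) :=
  coneHull ((fun q => q - p) '' P)

/-- A cone is finitely generated if it is the conic hull of finitely many vectors. -/
def FinitelyGeneratedCone {n : ℕ} (C : Set (E n)) : Prop :=
  ∃ (k : ℕ) (v : Fin k → E n), C = coneHull (Set.range v)

/-- `q` is Voronoi relevant for `p`: dropping `halfSpace p q` strictly enlarges the
intersection defining the Voronoi cell. -/
def VoronoiRelevant {n : ℕ} (P : Set (E n)) (p q : E n) : Prop :=
  (⋂ r ∈ P \ {p}, halfSpace p r) ⊂ ⋂ r ∈ P \ {p, q}, halfSpace p r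

theorem stmt17 {n : ℕ} (P : Set (E n)) (hP : IsDiscretePointSet P) (p : E n) (hp : p ∈ P)
    (k : ℕ) (v : Fin k → E n) (hv : ∀ i, v i ∈ P)
    (hin : p ∈ interior (convexHull ℝ (Set.range v)))
    (m : ℝ) (hub : ∀ i, (1/2) * ‖v i - p‖^2 ≤ m)
    (hmem : ∃ i, m = (1/2) * ‖v i - p‖^2) :
    voronoiCell P p ⊆ (fun x => p + m • x) '' {x : E n | ∀ i, (inner ℝ x (v i - p) : ℝ) ≤ 1} ∧
    Bornology.IsBounded ((fun x => p + m • x) '' {x : E n | ∀ i, (inner ℝ x (v i - p) : ℝ) ≤ 1}) ∧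
    Bornology.IsBounded (voronoiCell P p) := by
  set C : Set (E n) := {x : E n | ∀ i, (inner ℝ x (v i - p) : ℝ) ≤ 1} with hCdef
  -- A ball around p inside the convex hull
  obtain ⟨ε, hε, hball⟩ := Metric.isOpen_iff.1 isOpen_interior p hin
  have hball' : Metric.ball p ε ⊆ convexHull ℝ (Set.range v) :=
    hball.trans interior_subset
  -- C is bounded
  have hCbdd : Bornology.IsBounded C := by
    rw [isBounded_iff_forall_norm_le]
    refine ⟨2 / ε, fun x hx => ?_⟩
    rcases eq_or_ne x 0 with rfl | hx0
    · simp only [norm_zero]; positivity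
    -- The affine half-space determined by x contains the hull, hence the ball
    have hconv : Convex ℝ {w : E n | (inner ℝ x w : ℝ) ≤ 1 + inner ℝ x p} :=
      convex_halfSpace_le ⟨fun a b => inner_add_right x a b,
        fun c w => real_inner_smul_right x w c⟩ _
    have hsub : convexHull ℝ (Set.range v) ⊆ {w : E n | (inner ℝ x w : ℝ) ≤ 1 + inner ℝ x p} := by
      apply convexHull_min _ hconv
      rintro w ⟨i, rfl⟩
      have := hx i
      have h2 : (inner ℝ x (v i - p) : ℝ) = inner ℝ x (v i) - inner ℝ x p := inner_sub_right x _ _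
      simp only [Set.mem_setOf_eq]
      linarith [h2 ▸ this]
    -- the test point
    have hxnorm : (0:ℝ) < ‖x‖ := norm_pos_iff.2 hx0
    set w : E n := p + (ε / 2) • (‖x‖⁻¹ • x) with hw
    have hwball : w ∈ Metric.ball p ε := by
      have hn : ‖(ε / 2) • (‖x‖⁻¹ • x)‖ = ε / 2 := by
        rw [norm_smul, norm_smul, norm_inv, norm_norm, Real.norm_eq_abs,
          abs_of_pos (by positivity : (0:ℝ) < ε / 2), inv_mul_cancel₀ hxnorm.ne', mul_one]
      rw [Metric.mem_ball, dist_eq_norm, hw, add_sub_cancel_left, hn]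
      linarith
    have hwA := hsub (hball' hwball)
    have hinner : (inner ℝ x w : ℝ) = inner ℝ x p + (ε / 2) * ‖x‖⁻¹ * ‖x‖ ^ 2 := by
      rw [hw, inner_add_right, real_inner_smul_right, real_inner_smul_right,
        real_inner_self_eq_norm_sq]
      ring
    simp only [Set.mem_setOf_eq, hinner] at hwA
    have : (ε / 2) * ‖x‖ ≤ 1 := by
      have h3 : (ε / 2) * ‖x‖⁻¹ * ‖x‖ ^ 2 = (ε / 2) * ‖x‖ := by
        field_simp
      linarith [h3 ▸ (by linarith : (ε / 2) * ‖x‖⁻¹ * ‖x‖ ^ 2 ≤ 1)]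
    rw [le_div_iff₀ hε]; nlinarith
  have hm0 : 0 ≤ m := by obtain ⟨i, hi⟩ := hmem; rw [hi]; positivity
  -- the key inner ℝ product inequality on Voronoi cells
  have key : ∀ x ∈ voronoiCell P p, ∀ i, (inner ℝ (x - p) (v i - p) : ℝ) ≤ (1/2) * ‖v i - p‖ ^ 2 := by
    intro x hx i
    have hd : dist x p ≤ dist x (v i) := hx (v i) (hv i)
    rw [dist_eq_norm, dist_eq_norm] at hd
    have h1 : ‖x - v i‖ ^ 2 = ‖(x - p) - (v i - p)‖ ^ 2 := by ring_nf; rw [show x - v i = (x - p) - (v i - p) by abel]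
    have h2 : ‖(x - p) - (v i - p)‖ ^ 2 = ‖x - p‖ ^ 2 - 2 * (inner ℝ (x - p) (v i - p) : ℝ) + ‖v i - p‖ ^ 2 := norm_sub_sq_real _ _
    have h3 : ‖x - p‖ ^ 2 ≤ ‖x - v i‖ ^ 2 := by
      apply sq_le_sq' <;> nlinarith [norm_nonneg (x - p), norm_nonneg (x - v i)]
    nlinarith
  -- the main inclusion
  have hsub : voronoiCell P p ⊆ (fun x => p + m • x) '' C := by
    intro x hx
    rcases hm0.eq_or_lt with hm | hm
    · -- m = 0 : all v i = p, C = univ, so the space is subsingleton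
      have hvp : ∀ i, v i = p := by
        intro i
        have h1 := hub i
        have h2 : (0:ℝ) ≤ (1/2) * ‖v i - p‖ ^ 2 := by positivity
        have h3 : ‖v i - p‖ = 0 := by nlinarith [norm_nonneg (v i - p)]
        exact sub_eq_zero.1 (norm_eq_zero.1 h3)
      have hCuniv : C = Set.univ := by
        ext y; simp only [hCdef, Set.mem_setOf_eq, Set.mem_univ, iff_true]
        intro i; rw [hvp i]; simp
      rcases subsingleton_or_nontrivial (E n) with hS | hN
      · exact ⟨0, by rw [hCuniv]; trivial, Subsingleton.elim _ _⟩
      · exact absurd (hCuniv ▸ hCbdd) (NormedSpace.unbounded_univ ℝ (E n))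
    · refine ⟨m⁻¹ • (x - p), fun i => ?_, ?_⟩
      · rw [real_inner_smul_left]
        have h1 := (key x hx i).trans (hub i)
        calc m⁻¹ * (inner ℝ (x - p) (v i - p) : ℝ) ≤ m⁻¹ * m :=
              mul_le_mul_of_nonneg_left h1 (inv_nonneg.2 hm0)
          _ = 1 := inv_mul_cancel₀ hm.ne'
      · simp only [smul_smul, mul_inv_cancel₀ hm.ne', one_smul]
        abel
  refine ⟨hsub, ?_, ?_⟩
  · obtain ⟨R, hR⟩ := isBounded_iff_forall_norm_le.1 hCbdd
    rw [isBounded_iff_forall_norm_le]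
    refine ⟨‖p‖ + |m| * R, ?_⟩
    rintro x ⟨c, hc, rfl⟩
    calc ‖p + m • c‖ ≤ ‖p‖ + ‖m • c‖ := norm_add_le _ _
      _ = ‖p‖ + |m| * ‖c‖ := by rw [norm_smul, Real.norm_eq_abs]
      _ ≤ ‖p‖ + |m| * R := by
          have := hR c hc
          nlinarith [abs_nonneg m, norm_nonneg c]
  · obtain ⟨R, hR⟩ := isBounded_iff_forall_norm_le.1 hCbdd
    rw [isBounded_iff_forall_norm_le]
    refine ⟨‖p‖ + |m| * R, fun x hx => ?_⟩
    obtain ⟨c, hc, rfl⟩ := hsub hx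
    calc ‖p + m • c‖ ≤ ‖p‖ + ‖m • c‖ := norm_add_le _ _
      _ = ‖p‖ + |m| * ‖c‖ := by rw [norm_smul, Real.norm_eq_abs]
      _ ≤ ‖p‖ + |m| * R := by
          have := hR c hc
          nlinarith [abs_nonneg m, norm_nonneg c]
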